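/- arXiv:2505.01131 — 2 statements merged into one kernel-verified Lean document; each statement's English description precedes it below -/
import Mathlib

section
/- For any family F ⊆ A^n and any a < b in A, the compressed family C^{a,b}F = C^{a,b}_1 ⋯ C^{a,b}_n F satisfies Δ(C^{a,b}F) ⊆ C^{a,b}(ΔF), and hence |Δ(C^{a,b}F)| ≤ |ΔF|. -/
open Finset

/-- Deletion shadow in direction `i`: delete the `i`-th coordinate of each word. -/
def delShadow {r n : ℕ} (i : Fin (n+1)) (F : Finset (Fin (n+1) → Fin r)) :
    Finset (Fin n → Fin r) :=
  F.image (fun w => Fin.removeNth i w)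

/-- Full deletion shadow: union of the coordinate deletion shadows. -/
def fullShadow {r n : ℕ} (F : Finset (Fin (n+1) → Fin r)) : Finset (Fin n → Fin r) :=
  Finset.univ.biUnion (fun i => delShadow i F)

/-- The compression `C^{a,b}_i`: each word with letter `b` in coordinate `i` is
replaced by the word with letter `a` there instead, unless that word is already
in the family. -/
def comp {r n : ℕ} (a b : Fin r) (i : Fin n) (F : Finset (Fin n → Fin r)) :
    Finset (Fin n → Fin r) :=
  (F.filter (fun x => x i ≠ b ∨ Function.update x i a ∈ F)) ∪
    ((F.filter (fun x => x i = b ∧ Function.update x i a ∉ F)).image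
      (fun x => Function.update x i a))

/-- `C^{a,b} = C^{a,b}_1 ⋯ C^{a,b}_n`: the composition of the coordinate
compressions over all coordinates (coordinate `n` applied first). -/
def compAll {r n : ℕ} (a b : Fin r) (F : Finset (Fin n → Fin r)) :
    Finset (Fin n → Fin r) :=
  (List.finRange n).foldr (fun i G => comp a b i G) F

section aux
variable {r n : ℕ}

lemma removeNth_update_succAbove {α : Type*} (j : Fin (n+1)) (k : Fin n)
    (w : Fin (n+1) → α) (x : α) :
    Fin.removeNth j (Function.update w (j.succAbove k) x)
      = Function.update (Fin.removeNth j w) k x := by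
  ext m
  rcases eq_or_ne m k with rfl | h
  · simp [Fin.removeNth]
  · simp [Fin.removeNth, Function.update, h,
      (Fin.succAbove_right_injective (p := j)).ne h]

lemma finRange_filterMap (j : Fin (n+1)) :
    (List.finRange (n+1)).filterMap (finSuccEquiv' j) = List.finRange n := by
  refine (fun (hp : _) (h1 : List.Pairwise (· ≤ ·) _) (h2 : List.Pairwise (· ≤ ·) _) =>
    List.Perm.eq_of_sortedLE (List.sortedLE_iff_pairwise.mpr h1)
      (List.sortedLE_iff_pairwise.mpr h2) hp) ?_ ?_ ?_
  · rw [List.perm_ext_iff_of_nodup]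
    · intro k
      simp only [List.mem_filterMap, List.mem_finRange, true_and, iff_true]
      exact ⟨j.succAbove k, finSuccEquiv'_succAbove j k⟩
    · exact (List.nodup_finRange _).filterMap (by
        intro a b c ha hb
        exact (finSuccEquiv' j).injective (ha.trans hb.symm))
    · exact List.nodup_finRange _
  · refine List.Pairwise.imp le_of_lt ?_
    rw [List.pairwise_filterMap]
    refine (List.pairwise_lt_finRange _).imp ?_
    intro p q hpq x hx y hy
    have hx1 : (finSuccEquiv' j) p = some x := hx
    have hy1 : (finSuccEquiv' j) q = some y := hy
    have hx' : p = j.succAbove x := by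
      have := congrArg (finSuccEquiv' j).symm hx1
      simpa [finSuccEquiv'_symm_some] using this
    have hy' : q = j.succAbove y := by
      have := congrArg (finSuccEquiv' j).symm hy1
      simpa [finSuccEquiv'_symm_some] using this
    rw [hx', hy'] at hpq
    exact (Fin.succAbove_lt_succAbove_iff).mp hpq
  · exact List.Pairwise.imp le_of_lt (List.pairwise_lt_finRange _)

lemma comp_mono {a b : Fin r} (hab : a ≠ b) {i : Fin n}
    {F F' : Finset (Fin n → Fin r)} (h : F ⊆ F') : comp a b i F ⊆ comp a b i F' := by
  intro y hy
  simp only [comp, mem_union, mem_filter, mem_image] at hy ⊢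
  rcases hy with ⟨hyF, hc⟩ | ⟨x, ⟨hxF, hxb, -⟩, rfl⟩
  · rcases hc with h1 | h2
    · exact Or.inl ⟨h hyF, Or.inl h1⟩
    · exact Or.inl ⟨h hyF, Or.inr (h h2)⟩
  · by_cases hy' : Function.update x i a ∈ F'
    · exact Or.inl ⟨hy', Or.inl (by simp [hab])⟩
    · exact Or.inr ⟨x, ⟨h hxF, hxb, hy'⟩, rfl⟩

lemma card_comp {a b : Fin r} {i : Fin n} (F : Finset (Fin n → Fin r)) :
    (comp a b i F).card = F.card := by
  have hfc : F.filter (fun x => x i = b ∧ Function.update x i a ∉ F)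
      = F.filter (fun x => ¬ (x i ≠ b ∨ Function.update x i a ∈ F)) := by
    apply Finset.filter_congr
    intro x _
    simp only [not_or, not_not]
  rw [comp, Finset.card_union_of_disjoint, Finset.card_image_of_injOn]
  · rw [hfc,
      Finset.card_filter_add_card_filter_not
        (p := fun x => x i ≠ b ∨ Function.update x i a ∈ F)]
  · intro x hx y hy hxy
    simp only [mem_filter, Finset.mem_coe] at hx hy
    have h2 : Function.update x i b = Function.update y i b := by
      have := congrArg (fun f => Function.update f i b) hxy
      simpa [Function.update_idem] using this
    have hxb := hx.2.1
    rw [← hxb] at h2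
    rw [Function.update_eq_self] at h2
    rw [hxb, ← hy.2.1, Function.update_eq_self] at h2
    exact h2
  · rw [Finset.disjoint_left]
    intro z hz hz'
    simp only [mem_filter] at hz
    simp only [mem_image, mem_filter] at hz'
    obtain ⟨x, ⟨-, -, hxa⟩, rfl⟩ := hz'
    exact hxa hz.1

lemma delShadow_comp_self {a b : Fin r} {j : Fin (n+1)}
    (G : Finset (Fin (n+1) → Fin r)) :
    delShadow j (comp a b j G) ⊆ delShadow j G := by
  intro z hz
  simp only [delShadow, mem_image] at hz ⊢
  obtain ⟨w, hw, rfl⟩ := hz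
  simp only [comp, mem_union, mem_filter, mem_image] at hw
  rcases hw with ⟨hwG, -⟩ | ⟨x, ⟨hxG, -, -⟩, rfl⟩
  · exact ⟨w, hwG, rfl⟩
  · exact ⟨x, hxG, by simp⟩

lemma mem_delShadow {j : Fin (n+1)} {G : Finset (Fin (n+1) → Fin r)}
    {w : Fin (n+1) → Fin r} (h : w ∈ G) : Fin.removeNth j w ∈ delShadow j G :=
  Finset.mem_image_of_mem _ h

lemma delShadow_comp_ne {a b : Fin r} (hab : a ≠ b) (j : Fin (n+1)) (k : Fin n)
    (G : Finset (Fin (n+1) → Fin r)) :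
    delShadow j (comp a b (j.succAbove k) G) ⊆ comp a b k (delShadow j G) := by
  intro z hz
  simp only [delShadow, mem_image] at hz
  obtain ⟨w, hw, rfl⟩ := hz
  simp only [comp, mem_union, mem_filter, mem_image] at hw
  rcases hw with ⟨hwG, hc⟩ | ⟨x, ⟨hxG, hxb, hxa⟩, rfl⟩
  · refine Finset.mem_union_left _ (Finset.mem_filter.mpr ⟨mem_delShadow hwG, ?_⟩)
    rcases hc with h1 | h2
    · exact Or.inl h1
    · refine Or.inr ?_
      rw [← removeNth_update_succAbove]
      exact mem_delShadow h2
  · rw [removeNth_update_succAbove]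
    by_cases hz' : Function.update (Fin.removeNth j x) k a ∈ delShadow j G
    · exact Finset.mem_union_left _
        (Finset.mem_filter.mpr ⟨hz', Or.inl (by simp [hab])⟩)
    · refine Finset.mem_union_right _ (Finset.mem_image.mpr
        ⟨Fin.removeNth j x, Finset.mem_filter.mpr ⟨mem_delShadow hxG, hxb, hz'⟩, rfl⟩)

lemma foldr_comp_mono {a b : Fin r} (hab : a ≠ b) (L : List (Fin n))
    {F F' : Finset (Fin n → Fin r)} (h : F ⊆ F') :
    L.foldr (fun i G => comp a b i G) F ⊆ L.foldr (fun i G => comp a b i G) F' := by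
  induction L with
  | nil => exact h
  | cons p L ih => exact comp_mono hab ih

lemma delShadow_foldr {a b : Fin r} (hab : a ≠ b) (j : Fin (n+1))
    (L : List (Fin (n+1))) (F : Finset (Fin (n+1) → Fin r)) :
    delShadow j (L.foldr (fun i G => comp a b i G) F) ⊆
      (L.filterMap (finSuccEquiv' j)).foldr (fun i G => comp a b i G) (delShadow j F) := by
  induction L with
  | nil => exact Finset.Subset.refl _
  | cons p L ih =>
    rcases eq_or_ne p j with rfl | hpj
    · simp only [List.filterMap_cons, finSuccEquiv'_at, List.foldr_cons]
      exact (delShadow_comp_self _).trans ih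
    · obtain ⟨k, rfl⟩ : ∃ k, j.succAbove k = p := Fin.exists_succAbove_eq hpj
      simp only [List.filterMap_cons, finSuccEquiv'_succAbove, List.foldr_cons]
      exact (delShadow_comp_ne hab j k _).trans (comp_mono hab ih)

lemma card_compAll {a b : Fin r} (F : Finset (Fin n → Fin r)) :
    (compAll a b F).card = F.card := by
  rw [compAll]
  induction List.finRange n with
  | nil => rfl
  | cons p L ih => rw [List.foldr_cons, card_comp, ih]

end aux

/-- `Δ(C^{a,b}F) ⊆ C^{a,b}(ΔF)`, and hence `|Δ(C^{a,b}F)| ≤ |ΔF|`. -/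
theorem shadow_compAll (r n : ℕ) (a b : Fin r) (hab : a < b)
    (F : Finset (Fin (n+1) → Fin r)) :
    fullShadow (compAll a b F) ⊆ compAll a b (fullShadow F) ∧
      (fullShadow (compAll a b F)).card ≤ (fullShadow F).card := by
  have hne : a ≠ b := ne_of_lt hab
  have hsub : fullShadow (compAll a b F) ⊆ compAll a b (fullShadow F) := by
    intro z hz
    simp only [fullShadow, Finset.mem_biUnion, Finset.mem_univ, true_and] at hz
    obtain ⟨j, hj⟩ := hz
    have h1 := delShadow_foldr hne j (List.finRange (n+1)) F (by exact hj)
    rw [finRange_filterMap] at h1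
    have h2 : delShadow j F ⊆ fullShadow F := by
      intro y hy
      simp only [fullShadow, Finset.mem_biUnion, Finset.mem_univ, true_and]
      exact ⟨j, hy⟩
    exact foldr_comp_mono hne _ h2 h1
  refine ⟨hsub, ?_⟩
  calc (fullShadow (compAll a b F)).card
      ≤ (compAll a b (fullShadow F)).card := Finset.card_le_card hsub
    _ = (fullShadow F).card := card_compAll _
end

section
/- If f : A^n → [0,1] is an s-compressed fractional family with weight |f| ≤ s^n, and h is the fractional Hamming ball b^{(n,s)}_{k,α} on A^n with the same weight as f, then |Δf| ≥ |Δh|. -/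
open Finset

/-- Number of occurrences of the top symbol `s` (represented 0-indexed as the
letter of value `s-1`) in the word `w`. -/
def countTop {r n : ℕ} (s : ℕ) (w : Fin n → Fin r) : ℕ :=
  (Finset.univ.filter (fun i => (w i : ℕ) = s - 1)).card

/-- The Hamming ball `B^{(n,s)}(k)`: words of `[s]^n` (letters 0-indexed, so
letters of value `< s`) containing the symbol `s` (value `s-1`) at most `k` times. -/
def hammingBall (r n s k : ℕ) : Finset (Fin n → Fin r) :=
  Finset.univ.filter (fun w => (∀ i, (w i : ℕ) < s) ∧ countTop s w ≤ k)

/-- The fractional deletion shadow: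
`(Δf)(x₁,…,x_{n-1}) = max_{y ∈ A, i ∈ [n]} f(x₁,…,x_{i-1},y,x_i,…,x_{n-1})`. -/
noncomputable def fracShadow {r n : ℕ} (f : (Fin (n+1) → Fin r) → ℝ) :
    (Fin n → Fin r) → ℝ :=
  fun w => ⨆ p : Fin (n+1) × Fin r, f (Fin.insertNth p.1 p.2 w)

/-- The fractional Hamming ball `b^{(n,s)}_{k,α}`: value `1` on words of `[s]^n`
containing the symbol `s` (0-indexed: value `s-1`) at most `k` times, value `α`
on words of `[s]^n` containing it exactly `k+1` times, and `0` otherwise. -/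
noncomputable def fracBall (r n s k : ℕ) (α : ℝ) : (Fin n → Fin r) → ℝ :=
  fun w =>
    if (∀ i, (w i : ℕ) < s) then
      (if countTop s w ≤ k then 1 else if countTop s w = k + 1 then α else 0)
    else 0

/-- A fractional family is `s`-compressed if whenever `f(x₁,…,xₙ) > 0` and
`y < x_i` with `s ≤ x_i` (symbols `1,…,r` being represented 0-indexed, so the
symbol condition reads `s ≤ (x_i) + 1`), the word with `x_i` replaced by `y`
has `f`-value `1`. -/
def SCompressed {r n : ℕ} (s : ℕ) (f : (Fin n → Fin r) → ℝ) : Prop :=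
  ∀ (x : Fin n → Fin r) (i : Fin n) (y : Fin r),
    f x > 0 → y < x i → s ≤ (x i : ℕ) + 1 → f (Function.update x i y) = 1


set_option maxHeartbeats 1600000

noncomputable def Bc (s m j : ℕ) : ℝ := (m.choose j : ℝ) * ((s:ℝ) - 1)^(m - j)

noncomputable def Pw (s m K : ℕ) (α : ℝ) : ℝ :=
  (∑ j ∈ Finset.range K, Bc s m j) + α * Bc s m K

lemma s1_nonneg {s : ℕ} (hs1 : 1 ≤ s) : (0:ℝ) ≤ (s:ℝ) - 1 := by
  have : (1:ℝ) ≤ (s:ℝ) := by exact_mod_cast hs1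
  linarith

lemma s1_pos {s : ℕ} (hs : 2 ≤ s) : (0:ℝ) < (s:ℝ) - 1 := by
  have : (2:ℝ) ≤ (s:ℝ) := by exact_mod_cast hs
  linarith

lemma Bc_nonneg {s : ℕ} (hs1 : 1 ≤ s) (m j : ℕ) : 0 ≤ Bc s m j := by
  unfold Bc
  have := s1_nonneg hs1
  positivity

lemma Bc_pos {s : ℕ} (hs : 2 ≤ s) {m j : ℕ} (hj : j ≤ m) : 0 < Bc s m j := by
  unfold Bc
  have h1 := s1_pos hs
  have h2 : 0 < m.choose j := Nat.choose_pos hj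
  have h2' : (0:ℝ) < (m.choose j : ℝ) := by exact_mod_cast h2
  positivity

lemma Bc_eq_zero {s m j : ℕ} (h : m < j) : Bc s m j = 0 := by
  unfold Bc
  rw [Nat.choose_eq_zero_of_lt h]
  simp

lemma Bc_pascal {s : ℕ} (m j : ℕ) :
    Bc s (m+1) (j+1) = ((s:ℝ) - 1) * Bc s m (j+1) + Bc s m j := by
  unfold Bc
  rcases lt_or_ge j m with h | h
  · rw [Nat.choose_succ_succ m j]
    push_cast
    have e2 : m - j = (m - (j+1)) + 1 := by omega
    rw [e2, pow_succ]
    ring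
  · rcases Nat.eq_or_lt_of_le h with h' | h'
    · subst h'
      simp [Nat.choose_self, Nat.choose_succ_self]
    · rw [Nat.choose_eq_zero_of_lt (by omega), Nat.choose_eq_zero_of_lt (by omega),
        Nat.choose_eq_zero_of_lt h']
      simp

lemma Bc_zero_succ {s : ℕ} (m : ℕ) : Bc s (m+1) 0 = ((s:ℝ) - 1) * Bc s m 0 := by
  unfold Bc
  simp [pow_succ]
  ring

lemma sum_Bc {s : ℕ} (m : ℕ) :
    ∑ j ∈ Finset.range (m+1), Bc s m j = (s:ℝ)^m := by
  have h := add_pow (1 : ℝ) ((s:ℝ) - 1) m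
  have h2 : (1 : ℝ) + ((s:ℝ) - 1) = (s:ℝ) := by ring
  rw [h2] at h
  rw [h]
  apply Finset.sum_congr rfl
  intro j hj
  unfold Bc
  ring


-- Nat identity: (n+1) * C(n,i) = (n+1-i) * C(n+1,i)
lemma choose_dim_identity (n i : ℕ) :
    (n+1) * n.choose i = (n+1-i) * (n+1).choose i := by
  have h1 := Nat.add_one_mul_choose_eq n i
  have h2 := Nat.choose_succ_right_eq (n+1) i
  calc (n+1) * n.choose i = (n+1).choose (i+1) * (i+1) := h1
    _ = (n+1).choose i * (n+1-i) := h2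
    _ = (n+1-i) * (n+1).choose i := Nat.mul_comm _ _

lemma choose_ratio {n c j : ℕ} (hcj : c ≤ j) :
    n.choose j * (n+1).choose c ≤ n.choose c * (n+1).choose j := by
  have key : (n+1) * (n.choose j * (n+1).choose c) ≤ (n+1) * (n.choose c * (n+1).choose j) := by
    calc (n+1) * (n.choose j * (n+1).choose c)
        = ((n+1) * n.choose j) * (n+1).choose c := by ring
      _ = ((n+1-j) * (n+1).choose j) * (n+1).choose c := by rw [choose_dim_identity]
      _ ≤ ((n+1-c) * (n+1).choose c) * (n+1).choose j := by
          have : (n+1-j) ≤ (n+1-c) := by omega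
          calc (n+1-j) * (n+1).choose j * (n+1).choose c
              = ((n+1-j)) * ((n+1).choose j * (n+1).choose c) := by ring
            _ ≤ ((n+1-c)) * ((n+1).choose c * (n+1).choose j) := by
                apply Nat.mul_le_mul this (le_of_eq (mul_comm _ _))
            _ = (n+1-c) * (n+1).choose c * (n+1).choose j := by ring
      _ = ((n+1) * n.choose c) * (n+1).choose j := by rw [choose_dim_identity]
      _ = (n+1) * (n.choose c * (n+1).choose j) := by ring
  exact Nat.le_of_mul_le_mul_left key (Nat.succ_pos n)

lemma Bc_ratio {s : ℕ} (hs1 : 1 ≤ s) {n c j : ℕ} (hcj : c ≤ j) :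
    Bc s n j * Bc s (n+1) c ≤ Bc s n c * Bc s (n+1) j := by
  rcases le_or_gt j n with hj | hj
  · -- j ≤ n: powers match
    unfold Bc
    have hpow : (n - c) + (n + 1 - j) = (n - j) + (n + 1 - c) := by omega
    have e1 : ((s:ℝ)-1)^(n-j) * ((s:ℝ)-1)^(n+1-c) = ((s:ℝ)-1)^(n-c) * ((s:ℝ)-1)^(n+1-j) := by
      rw [← pow_add, ← pow_add, hpow]
    have hc := choose_ratio (n := n) hcj
    have hc' : ((n.choose j * (n+1).choose c : ℕ) : ℝ) ≤ ((n.choose c * (n+1).choose j : ℕ) : ℝ) := by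
      exact_mod_cast hc
    push_cast at hc'
    have hs0 := s1_nonneg hs1
    calc (n.choose j : ℝ) * ((s:ℝ)-1)^(n-j) * ((n+1).choose c * ((s:ℝ)-1)^(n+1-c))
        = ((n.choose j : ℝ) * (n+1).choose c) * (((s:ℝ)-1)^(n-j) * ((s:ℝ)-1)^(n+1-c)) := by ring
      _ = ((n.choose j : ℝ) * (n+1).choose c) * (((s:ℝ)-1)^(n-c) * ((s:ℝ)-1)^(n+1-j)) := by rw [e1]
      _ ≤ ((n.choose c : ℝ) * (n+1).choose j) * (((s:ℝ)-1)^(n-c) * ((s:ℝ)-1)^(n+1-j)) := by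
          apply mul_le_mul_of_nonneg_right hc'
          positivity
      _ = (n.choose c : ℝ) * ((s:ℝ)-1)^(n-c) * ((n+1).choose j * ((s:ℝ)-1)^(n+1-j)) := by ring
  · -- j > n : Bc s n j = 0
    rw [Bc_eq_zero hj]
    simp only [zero_mul]
    have h1 := Bc_nonneg hs1 (s := s) n c
    have h2 := Bc_nonneg hs1 (s := s) (n+1) j
    positivity

lemma Pw_nonneg {s : ℕ} (hs1 : 1 ≤ s) {α : ℝ} (hα : 0 ≤ α) (m K : ℕ) : 0 ≤ Pw s m K α := by
  unfold Pw
  have h1 : 0 ≤ ∑ j ∈ Finset.range K, Bc s m j :=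
    Finset.sum_nonneg fun j _ => Bc_nonneg hs1 m j
  have h2 := Bc_nonneg hs1 (s := s) m K
  positivity

lemma Pw_mono_K {s : ℕ} (hs1 : 1 ≤ s) {α : ℝ} (hα0 : 0 ≤ α) (hα1 : α ≤ 1) (m K : ℕ) :
    Pw s m K α ≤ Pw s m (K+1) α := by
  unfold Pw
  rw [Finset.sum_range_succ]
  have h1 := Bc_nonneg hs1 (s := s) m K
  have h2 := Bc_nonneg hs1 (s := s) m (K+1)
  nlinarith

lemma Pw_le_pow {s : ℕ} (hs1 : 1 ≤ s) {α : ℝ} (hα0 : 0 ≤ α) (hα1 : α ≤ 1) (m K : ℕ) :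
    Pw s m K α ≤ (s:ℝ)^m := by
  rcases le_or_gt K m with hK | hK
  · have : Pw s m K α ≤ ∑ j ∈ Finset.range (m+1), Bc s m j := by
      unfold Pw
      have hsub : Finset.range (K+1) ⊆ Finset.range (m+1) := by
        apply Finset.range_subset_range.2; omega
      calc (∑ j ∈ Finset.range K, Bc s m j) + α * Bc s m K
          ≤ (∑ j ∈ Finset.range K, Bc s m j) + Bc s m K := by
            nlinarith [Bc_nonneg hs1 (s := s) m K]
        _ = ∑ j ∈ Finset.range (K+1), Bc s m j := (Finset.sum_range_succ _ _).symm
        _ ≤ ∑ j ∈ Finset.range (m+1), Bc s m j :=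
            Finset.sum_le_sum_of_subset_of_nonneg hsub (fun j _ _ => Bc_nonneg hs1 m j)
    rw [sum_Bc] at this
    exact this
  · unfold Pw
    rw [Bc_eq_zero hK]
    have : ∑ j ∈ Finset.range K, Bc s m j = ∑ j ∈ Finset.range (m+1), Bc s m j := by
      symm
      apply Finset.sum_subset (Finset.range_subset_range.2 (by omega))
      intro j _ hj
      exact Bc_eq_zero (by simp at hj ⊢; omega)
    rw [this, sum_Bc]
    simp

lemma Pw_rec {s : ℕ} (m K : ℕ) (α : ℝ) :
    Pw s (m+1) (K+1) α = ((s:ℝ)-1) * Pw s m (K+1) α + Pw s m K α := by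
  unfold Pw
  have hsum : ∑ j ∈ Finset.range (K+1), Bc s (m+1) j
      = ((s:ℝ)-1) * (∑ j ∈ Finset.range (K+1), Bc s m j) + ∑ j ∈ Finset.range K, Bc s m j := by
    rw [Finset.sum_range_succ' (fun j => Bc s (m+1) j) K]
    have : ∀ j, Bc s (m+1) (j+1) = ((s:ℝ)-1) * Bc s m (j+1) + Bc s m j := fun j => Bc_pascal m j
    rw [Finset.sum_congr rfl (fun j _ => this j)]
    rw [Finset.sum_add_distrib, Bc_zero_succ]
    rw [← Finset.mul_sum]
    rw [Finset.sum_range_succ' (fun j => Bc s m j) K]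
    ring
  rw [hsum, Bc_pascal m K]
  ring


noncomputable def lineG (s n c : ℕ) (t : ℝ) : ℝ :=
  (∑ j ∈ Finset.range c, Bc s n j)
    + (t - ∑ j ∈ Finset.range c, Bc s (n+1) j) * (Bc s n c / Bc s (n+1) c)

noncomputable def Gc (s n : ℕ) (t : ℝ) : ℝ :=
  (Finset.range (n+2)).inf' (by simp) (fun c => lineG s n c t)

lemma Gc_le_line (s n : ℕ) {c : ℕ} (hc : c ∈ Finset.range (n+2)) (t : ℝ) :
    Gc s n t ≤ lineG s n c t := Finset.inf'_le _ hc

lemma le_Gc {s n : ℕ} {L t : ℝ} (h : ∀ c ∈ Finset.range (n+2), L ≤ lineG s n c t) :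
    L ≤ Gc s n t := Finset.le_inf' _ _ h

lemma Gc_exists (s n : ℕ) (t : ℝ) :
    ∃ c ∈ Finset.range (n+2), Gc s n t = lineG s n c t := by
  obtain ⟨c, hc, h⟩ := Finset.exists_mem_eq_inf' (by simp : (Finset.range (n+2)).Nonempty)
    (fun c => lineG s n c t)
  exact ⟨c, hc, h⟩

lemma lineG_mono {s : ℕ} (hs1 : 1 ≤ s) (n c : ℕ) {t t' : ℝ} (h : t ≤ t') :
    lineG s n c t ≤ lineG s n c t' := by
  unfold lineG
  have hq : 0 ≤ Bc s n c / Bc s (n+1) c :=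
    div_nonneg (Bc_nonneg hs1 _ _) (Bc_nonneg hs1 _ _)
  nlinarith

lemma Gc_mono {s : ℕ} (hs1 : 1 ≤ s) (n : ℕ) {t t' : ℝ} (h : t ≤ t') :
    Gc s n t ≤ Gc s n t' := by
  obtain ⟨c, hc, he⟩ := Gc_exists s n t'
  rw [he]
  exact le_trans (Gc_le_line s n hc t) (lineG_mono hs1 n c h)

lemma Gc_3pt {s : ℕ} (n : ℕ) {a b c : ℝ} (hab : a ≤ b) (hbc : b ≤ c) :
    (c - b) * Gc s n a + (b - a) * Gc s n c ≤ (c - a) * Gc s n b := by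
  obtain ⟨c₀, hc₀, he⟩ := Gc_exists s n b
  have key : (c - a) * lineG s n c₀ b
      = (c - b) * lineG s n c₀ a + (b - a) * lineG s n c₀ c := by
    unfold lineG
    ring
  rw [he, key]
  have h1 : Gc s n a ≤ lineG s n c₀ a := Gc_le_line s n hc₀ a
  have h2 : Gc s n c ≤ lineG s n c₀ c := Gc_le_line s n hc₀ c
  nlinarith

lemma Gc_zero {s : ℕ} (hs : 2 ≤ s) (n : ℕ) : Gc s n 0 = 0 := by
  have hs1 : 1 ≤ s := by omega
  apply le_antisymm
  · have h0 : (0:ℕ) ∈ Finset.range (n+2) := by simp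
    have := Gc_le_line s n h0 0
    simpa [lineG] using this
  · apply le_Gc
    intro c hc
    unfold lineG
    have hc' : c ≤ n+1 := by simp at hc; omega
    have hD : 0 < Bc s (n+1) c := Bc_pos hs hc'
    have hterm : (∑ j ∈ Finset.range c, Bc s (n+1) j) * (Bc s n c / Bc s (n+1) c)
        ≤ ∑ j ∈ Finset.range c, Bc s n j := by
      rw [Finset.sum_mul]
      apply Finset.sum_le_sum
      intro j hj
      have hjc : j ≤ c := by simp at hj; omega
      have h := Bc_ratio hs1 (n := n) hjc
      rw [← mul_div_assoc, div_le_iff₀ hD]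
      nlinarith
    nlinarith

lemma Gc_chord {s : ℕ} (hs : 2 ≤ s) (n : ℕ) {x y : ℝ} (hx : 0 ≤ x) (hxy : x ≤ y) :
    x * Gc s n y ≤ y * Gc s n x := by
  have h := Gc_3pt (s := s) n hx hxy
  rw [Gc_zero hs n] at h
  nlinarith

-- the key lower bound: every line at a ball point is ≥ the lower-dim ball value
lemma Gc_ball_lb {s : ℕ} (hs : 2 ≤ s) (n K : ℕ) {α : ℝ} (hα0 : 0 ≤ α) (hα1 : α ≤ 1) :
    Pw s n K α ≤ Gc s n (Pw s (n+1) K α) := by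
  have hs1 : 1 ≤ s := by omega
  apply le_Gc
  intro c hc
  have hc' : c ≤ n+1 := by simp at hc; omega
  have hD : 0 < Bc s (n+1) c := Bc_pos hs hc'
  have hq : 0 ≤ Bc s n c / Bc s (n+1) c :=
    div_nonneg (Bc_nonneg hs1 _ _) (le_of_lt hD)
  -- ratio inequality, divided form
  have hrat : ∀ j, c ≤ j → Bc s n j ≤ Bc s (n+1) j * (Bc s n c / Bc s (n+1) c) := by
    intro j hj
    have h := Bc_ratio hs1 (n := n) hj
    rw [← mul_div_assoc, le_div_iff₀ hD]
    nlinarith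
  have hrat' : ∀ j, j ≤ c → Bc s (n+1) j * (Bc s n c / Bc s (n+1) c) ≤ Bc s n j := by
    intro j hj
    have h := Bc_ratio hs1 (n := n) hj
    rw [← mul_div_assoc, div_le_iff₀ hD]
    nlinarith
  rcases le_or_gt c K with hcK | hKc
  · -- c ≤ K
    unfold lineG Pw
    have hsplit : ∑ j ∈ Finset.range K, Bc s (n+1) j
        = (∑ j ∈ Finset.range c, Bc s (n+1) j) + ∑ j ∈ Finset.Ico c K, Bc s (n+1) j := by
      have := Finset.sum_Ico_consecutive (fun j => Bc s (n+1) j) (Nat.zero_le c) hcK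
      simp only [← Finset.range_eq_Ico] at this
      exact this.symm
    have hsplitA : ∑ j ∈ Finset.range K, Bc s n j
        = (∑ j ∈ Finset.range c, Bc s n j) + ∑ j ∈ Finset.Ico c K, Bc s n j := by
      have := Finset.sum_Ico_consecutive (fun j => Bc s n j) (Nat.zero_le c) hcK
      simp only [← Finset.range_eq_Ico] at this
      exact this.symm
    rw [hsplit, hsplitA]
    have hterm : ∑ j ∈ Finset.Ico c K, Bc s n j
        ≤ (∑ j ∈ Finset.Ico c K, Bc s (n+1) j) * (Bc s n c / Bc s (n+1) c) := by
      rw [Finset.sum_mul]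
      apply Finset.sum_le_sum
      intro j hj
      exact hrat j (by simp at hj; omega)
    have hK' : Bc s n K ≤ Bc s (n+1) K * (Bc s n c / Bc s (n+1) c) := hrat K hcK
    nlinarith [mul_le_mul_of_nonneg_left hK' hα0]
  · -- K < c
    unfold lineG Pw
    have hsplit : ∑ j ∈ Finset.range c, Bc s (n+1) j
        = (∑ j ∈ Finset.range K, Bc s (n+1) j) + ∑ j ∈ Finset.Ico K c, Bc s (n+1) j := by
      have := Finset.sum_Ico_consecutive (fun j => Bc s (n+1) j) (Nat.zero_le K) (le_of_lt hKc)
      simp only [← Finset.range_eq_Ico] at this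
      exact this.symm
    have hsplitA : ∑ j ∈ Finset.range c, Bc s n j
        = (∑ j ∈ Finset.range K, Bc s n j) + ∑ j ∈ Finset.Ico K c, Bc s n j := by
      have := Finset.sum_Ico_consecutive (fun j => Bc s n j) (Nat.zero_le K) (le_of_lt hKc)
      simp only [← Finset.range_eq_Ico] at this
      exact this.symm
    rw [hsplit, hsplitA]
    have hbotD : ∑ j ∈ Finset.Ico K c, Bc s (n+1) j
        = Bc s (n+1) K + ∑ j ∈ Finset.Ico (K+1) c, Bc s (n+1) j :=
      Finset.sum_eq_sum_Ico_succ_bot hKc _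
    have hbotA : ∑ j ∈ Finset.Ico K c, Bc s n j
        = Bc s n K + ∑ j ∈ Finset.Ico (K+1) c, Bc s n j :=
      Finset.sum_eq_sum_Ico_succ_bot hKc _
    rw [hbotD, hbotA]
    have hterm : ∑ j ∈ Finset.Ico (K+1) c, Bc s (n+1) j * (Bc s n c / Bc s (n+1) c)
        ≤ ∑ j ∈ Finset.Ico (K+1) c, Bc s n j := by
      apply Finset.sum_le_sum
      intro j hj
      exact hrat' j (by simp at hj; omega)
    rw [← Finset.sum_mul] at hterm
    have hKterm : Bc s (n+1) K * (Bc s n c / Bc s (n+1) c) ≤ Bc s n K :=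
      hrat' K (by omega)
    nlinarith [mul_le_mul_of_nonneg_left hKterm hα0]

lemma Gc_ball_ub {s : ℕ} (hs : 2 ≤ s) {n K : ℕ} (hK : K ≤ n+1) (α : ℝ) :
    Gc s n (Pw s (n+1) K α) ≤ Pw s n K α := by
  have hK' : K ∈ Finset.range (n+2) := by simp; omega
  refine le_trans (Gc_le_line s n hK' _) ?_
  unfold lineG Pw
  have hD : Bc s (n+1) K ≠ 0 := ne_of_gt (Bc_pos hs hK)
  have h1 : (∑ j ∈ Finset.range K, Bc s (n+1) j) + α * Bc s (n+1) K
      - (∑ j ∈ Finset.range K, Bc s (n+1) j) = α * Bc s (n+1) K := by ring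
  rw [h1]
  have h2 : α * Bc s (n+1) K * (Bc s n K / Bc s (n+1) K) = α * Bc s n K := by
    field_simp
  rw [h2]


lemma rep_exists {s : ℕ} (hs : 2 ≤ s) (n : ℕ) {t : ℝ} (ht0 : 0 ≤ t) (ht : t < (s:ℝ)^(n+1)) :
    ∃ K α, K ≤ n+1 ∧ 0 ≤ α ∧ α ≤ 1 ∧ Pw s (n+1) K α = t := by
  classical
  set S : ℕ → ℝ := fun K => ∑ j ∈ Finset.range K, Bc s (n+1) j with hS
  set Kq := Nat.findGreatest (fun K => S K ≤ t) (n+1) with hKq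
  have hKle : Kq ≤ n+1 := Nat.findGreatest_le _
  have hSK : S Kq ≤ t := by
    rw [hKq]
    exact Nat.findGreatest_spec (P := fun K => S K ≤ t) (Nat.zero_le _)
      (by simpa [hS] using ht0)
  have hnext : t < S (Kq + 1) := by
    rcases Nat.lt_or_ge Kq (n+1) with h | h
    · by_contra hcon
      push_neg at hcon
      exact Nat.findGreatest_is_greatest (Nat.lt_succ_self Kq) (by omega) hcon
    · have hKeq : Kq = n+1 := le_antisymm hKle h
      have : S (Kq+1) = (s:ℝ)^(n+1) := by
        rw [hKeq]
        exact sum_Bc (n+1)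
      rw [this]
      exact ht
  have hB : 0 < Bc s (n+1) Kq := Bc_pos hs hKle
  have hstep : S (Kq+1) = S Kq + Bc s (n+1) Kq := by
    simp [hS, Finset.sum_range_succ]
  refine ⟨Kq, (t - S Kq)/Bc s (n+1) Kq, hKle, ?_, ?_, ?_⟩
  · apply div_nonneg (by linarith) (le_of_lt hB)
  · rw [div_le_one hB]
    rw [hstep] at hnext
    linarith
  · unfold Pw
    rw [div_mul_cancel₀ _ (ne_of_gt hB)]
    simp [hS]

lemma core_ineq {s : ℕ} (hs : 2 ≤ s) (n : ℕ) {ι : Type*} [DecidableEq ι]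
    (Lo : Finset ι) (t : ι → ℝ) {τ T C h : ℝ}
    (hcard : (Lo.card : ℝ) = (s:ℝ) - 1)
    (hτ0 : 0 < τ) (hτT : τ < T) (hC0 : 0 ≤ C) (hCT : C ≤ T)
    (hlo : ∀ z ∈ Lo, τ ≤ t z ∧ t z ≤ T)
    (hhτ : τ ≤ h) (hhC : C ≤ h)
    (hW : ((s:ℝ)-1) * T + C ≤ (∑ z ∈ Lo, t z) + h) :
    ((s:ℝ)-1) * Gc s n T + Gc s n C ≤ (∑ z ∈ Lo, Gc s n (t z)) + (h/τ) * Gc s n τ := by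
  have hs1 : 1 ≤ s := by omega
  set GT := Gc s n T with hGT
  set Gτ := Gc s n τ with hGτ
  set GC := Gc s n C with hGC
  set σ := (GT - Gτ)/(T - τ) with hσdef
  have hTτ : (0:ℝ) < T - τ := by linarith
  have hσeq : σ * (T - τ) = GT - Gτ := by
    rw [hσdef, div_mul_cancel₀ _ (ne_of_gt hTτ)]
  have hσ0 : 0 ≤ σ := by
    apply div_nonneg _ (le_of_lt hTτ)
    have := Gc_mono (s := s) hs1 n (le_of_lt hτT)
    linarith
  -- τ * σ ≤ Gτ
  have hτσ : τ * σ ≤ Gτ := by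
    have hch := Gc_chord hs n (le_of_lt hτ0) (le_of_lt hτT)
    -- τ * GT ≤ T * Gτ
    nlinarith
  -- step A, pointwise
  have hA : ∀ z ∈ Lo, GT - σ * (T - t z) ≤ Gc s n (t z) := by
    intro z hz
    obtain ⟨h1, h2⟩ := hlo z hz
    have h3 := Gc_3pt (s := s) n h1 h2
    nlinarith
  have hAsum : (Lo.card : ℝ) * (GT - σ * T) + σ * (∑ z ∈ Lo, t z) ≤ ∑ z ∈ Lo, Gc s n (t z) := by
    have := Finset.sum_le_sum hA
    rw [Finset.sum_sub_distrib] at this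
    simp only [Finset.sum_const, nsmul_eq_mul] at this
    have e : ∑ z ∈ Lo, σ * (T - t z) = (Lo.card : ℝ) * (σ * T) - σ * ∑ z ∈ Lo, t z := by
      calc ∑ z ∈ Lo, σ * (T - t z) = ∑ z ∈ Lo, (σ * T - σ * t z) := by
            apply Finset.sum_congr rfl; intro z _; ring
        _ = (∑ _z ∈ Lo, σ * T) - ∑ z ∈ Lo, σ * t z := Finset.sum_sub_distrib _ _
        _ = (Lo.card : ℝ) * (σ * T) - σ * ∑ z ∈ Lo, t z := by
            rw [Finset.sum_const, nsmul_eq_mul, Finset.mul_sum]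
    rw [e] at this
    linarith
  -- step B
  have hB : GC + σ * (h - C) ≤ (h/τ) * Gτ := by
    rw [show h/τ * Gτ = h * Gτ/τ from div_mul_eq_mul_div h τ Gτ, le_div_iff₀ hτ0]
    rcases le_or_gt C τ with hCτ | hτC
    · -- C ≤ τ
      have h3 := Gc_3pt (s := s) n hCτ (le_of_lt hτT)
      have hkey : σ * (τ - C) ≤ Gτ - GC := by nlinarith
      nlinarith [mul_nonneg (by linarith : (0:ℝ) ≤ h - τ) (by linarith : (0:ℝ) ≤ Gτ - τ * σ)]
    · -- τ < C
      have hch := Gc_chord hs n (le_of_lt hτ0) (le_of_lt hτC)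
      nlinarith [mul_nonneg (by linarith : (0:ℝ) ≤ h - C) (by linarith : (0:ℝ) ≤ Gτ - τ * σ)]
  -- combine
  have hfinal : (Lo.card : ℝ) * (GT - σ * T) + σ * (∑ z ∈ Lo, t z) + (GC + σ * (h - C))
      ≤ (∑ z ∈ Lo, Gc s n (t z)) + (h/τ) * Gτ := by
    linarith
  rw [hcard] at hfinal
  nlinarith [hfinal, mul_nonneg hσ0 (by linarith : (0:ℝ) ≤ (∑ z ∈ Lo, t z) + h - (((s:ℝ)-1)*T + C))]


-- E2
lemma insertNth_succ_cons {γ : Type*} {m : ℕ} (i : Fin (m+1)) (y z : γ) (v : Fin m → γ) :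
    Fin.insertNth (α := fun _ => γ) i.succ y (Fin.cons z v)
      = Fin.cons z (Fin.insertNth (α := fun _ => γ) i y v) := by
  funext j
  rcases eq_or_ne j i.succ with rfl | hj
  · rw [Fin.insertNth_apply_same]
    cases' Fin.eq_zero_or_eq_succ i.succ with h h
    · exact absurd h (Fin.succ_ne_zero i)
    · obtain ⟨i', hi'⟩ := h
      rw [hi']
      rw [Fin.cons_succ]
      have : i' = i := by
        apply Fin.succ_injective
        exact hi'.symm
      rw [this, Fin.insertNth_apply_same]
  · obtain ⟨j', hj'⟩ := Fin.exists_succAbove_eq hj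
    subst hj'
    rw [Fin.insertNth_apply_succAbove]
    cases' j' using Fin.cases with j''
    · rw [Fin.succ_succAbove_zero, Fin.cons_zero, Fin.cons_zero]
    · rw [Fin.succ_succAbove_succ, Fin.cons_succ, Fin.cons_succ,
        Fin.insertNth_apply_succAbove]

-- sum over function space: peel first coordinate
lemma sum_pi_split {r m : ℕ} (F : (Fin (m+1) → Fin r) → ℝ) :
    ∑ x : Fin (m+1) → Fin r, F x = ∑ z : Fin r, ∑ v : Fin m → Fin r, F (Fin.cons z v) := by
  have e1 : ∑ p : Fin r × (Fin m → Fin r), F (Fin.cons p.1 p.2) = ∑ x, F x :=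
    Fintype.sum_equiv (Fin.consEquiv (fun _ => Fin r)) _ _ (fun p => rfl)
  rw [← e1, Fintype.sum_prod_type]

-- E6: number of low letters
lemma card_lo {r s : ℕ} (hsr : s - 1 ≤ r) :
    ((Finset.univ.filter (fun z : Fin r => (z:ℕ) < s - 1)).card) = s - 1 := by
  rcases eq_or_lt_of_le hsr with h | h
  · have : (Finset.univ.filter (fun z : Fin r => (z:ℕ) < s - 1)) = Finset.univ := by
      apply Finset.filter_true_of_mem
      intro z _
      have := z.isLt
      omega
    rw [this, Finset.card_univ, Fintype.card_fin, h]
  · have : (Finset.univ.filter (fun z : Fin r => (z:ℕ) < s - 1)) = Finset.Iio ⟨s-1, h⟩ := by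
      ext z
      simp [Fin.lt_def]
    rw [this, Fin.card_Iio]

-- fracShadow basics
lemma shadow_bddAbove {r n : ℕ} (f : (Fin (n+1) → Fin r) → ℝ) (w : Fin n → Fin r) :
    BddAbove (Set.range fun p : Fin (n+1) × Fin r => f (Fin.insertNth p.1 p.2 w)) :=
  Set.Finite.bddAbove (Set.finite_range _)

lemma le_fracShadow {r n : ℕ} (hr : 0 < r) (f : (Fin (n+1) → Fin r) → ℝ)
    (i : Fin (n+1)) (y : Fin r) (w : Fin n → Fin r) :
    f (Fin.insertNth i y w) ≤ fracShadow f w := by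
  exact le_ciSup (shadow_bddAbove f w) (⟨i, y⟩ : Fin (n+1) × Fin r)

lemma fracShadow_le {r n : ℕ} (hr : 0 < r) {f : (Fin (n+1) → Fin r) → ℝ} {a : ℝ}
    (hf : ∀ x, f x ≤ a) (w : Fin n → Fin r) : fracShadow f w ≤ a := by
  have : Nonempty (Fin (n+1) × Fin r) := ⟨⟨0, ⟨0, hr⟩⟩⟩
  exact ciSup_le fun p => hf _

lemma fracShadow_nonneg {r n : ℕ} (hr : 0 < r) {f : (Fin (n+1) → Fin r) → ℝ}
    (hf : ∀ x, 0 ≤ f x) (w : Fin n → Fin r) : 0 ≤ fracShadow f w := by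
  refine le_trans (hf (Fin.insertNth 0 ⟨0, hr⟩ w)) ?_
  exact le_fracShadow hr f 0 ⟨0, hr⟩ w

lemma f_le_shadow_removeNth {r n : ℕ} (hr : 0 < r) (f : (Fin (n+1) → Fin r) → ℝ)
    (i : Fin (n+1)) (x : Fin (n+1) → Fin r) :
    f x ≤ fracShadow f (Fin.removeNth i x) := by
  have h := le_fracShadow hr f i (x i) (Fin.removeNth i x)
  rwa [Fin.insertNth_self_removeNth] at h

-- slices
lemma slice_compressed {r s m : ℕ} {f : (Fin (m+1) → Fin r) → ℝ}
    (hc : SCompressed s f) (hf1 : ∀ x, f x ≤ 1) (z : Fin r) :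
    SCompressed s (fun v : Fin m → Fin r => f (Fin.cons z v)) := by
  intro x i y hx hyx hsx
  have h := hc (Fin.cons z x) i.succ y (by simpa using hx)
    (by rwa [Fin.cons_succ]) (by rwa [Fin.cons_succ])
  rw [← Fin.cons_update] at h
  exact h

lemma slice_cross {r s m : ℕ} {f : (Fin (m+1) → Fin r) → ℝ}
    (hc : SCompressed s f) (hf0 : ∀ x, 0 ≤ f x) (hf1 : ∀ x, f x ≤ 1)
    {z z' : Fin r} (hzz : z' < z) (hz : s ≤ (z:ℕ) + 1) (v : Fin m → Fin r) :
    f (Fin.cons z v) ≤ f (Fin.cons z' v) := by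
  rcases le_or_gt (f (Fin.cons z v)) 0 with h | h
  · exact le_trans h (hf0 _)
  · have := hc (Fin.cons z v) 0 z' h (by rwa [Fin.cons_zero]) (by rwa [Fin.cons_zero])
    rw [Fin.update_cons_zero] at this
    rw [this]
    exact hf1 _


lemma countTop_nil {r s : ℕ} (x : Fin 0 → Fin r) : countTop s x = 0 := by
  simp [countTop]

lemma countTop_cons {r s m : ℕ} (z : Fin r) (v : Fin m → Fin r) :
    countTop s (Fin.cons z v) = (if (z:ℕ) = s - 1 then 1 else 0) + countTop s v := by
  unfold countTop
  rw [Finset.card_filter, Finset.card_filter, Fin.sum_univ_succ]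
  simp [Fin.cons_zero, Fin.cons_succ]

lemma allLt_cons {r s m : ℕ} (z : Fin r) (v : Fin m → Fin r) :
    (∀ i, ((Fin.cons z v : Fin (m+1) → Fin r) i : ℕ) < s)
      ↔ ((z:ℕ) < s ∧ ∀ i, ((v i : ℕ) < s)) := by
  rw [Fin.forall_fin_succ]
  simp [Fin.cons_zero, Fin.cons_succ]

lemma sum_pi_split' {r m : ℕ} (F : (Fin (m+1) → Fin r) → ℝ) :
    ∑ x : Fin (m+1) → Fin r, F x = ∑ z : Fin r, ∑ v : Fin m → Fin r, F (Fin.cons z v) := by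
  have e1 : ∑ p : Fin r × (Fin m → Fin r), F (Fin.cons p.1 p.2) = ∑ x, F x :=
    Fintype.sum_equiv (Fin.consEquiv (fun _ => Fin r)) _ _ (fun p => rfl)
  rw [← e1, Fintype.sum_prod_type]

lemma sum_ball_count {r s : ℕ} (hs : 2 ≤ s) (hsr : s ≤ r) (m : ℕ) (φ : ℕ → ℝ) :
    ∑ x : Fin m → Fin r, (if (∀ i, ((x i:ℕ) < s)) then φ (countTop s x) else 0)
      = ∑ j ∈ Finset.range (m+1), Bc s m j * φ j := by
  induction m generalizing φ with
  | zero =>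
    rw [Fintype.sum_eq_single (fun (_ : Fin 0) => (⟨0, by omega⟩ : Fin r))]
    · simp [countTop_nil, Bc]
    · intro x hx
      exact absurd (Subsingleton.elim _ _) hx
  | succ m ih =>
    rw [sum_pi_split']
    have hinner : ∀ z : Fin r,
        (∑ v : Fin m → Fin r, if (∀ i, ((Fin.cons z v : Fin (m+1) → Fin r) i:ℕ) < s)
          then φ (countTop s (Fin.cons z v)) else 0)
        = if (z:ℕ) < s - 1
            then (∑ v : Fin m → Fin r, if (∀ i, ((v i:ℕ) < s)) then φ (countTop s v) else 0)
            else (if (z:ℕ) = s - 1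
              then (∑ v : Fin m → Fin r, if (∀ i, ((v i:ℕ) < s)) then φ (countTop s v + 1) else 0)
              else 0) := by
      intro z
      rcases lt_or_ge (z:ℕ) (s-1) with hz | hz
      · rw [if_pos hz]
        apply Finset.sum_congr rfl
        intro v _
        have hzz : ¬((z:ℕ) = s - 1) := by omega
        by_cases hv : (∀ i, ((v i:ℕ) < s))
        · rw [if_pos ((allLt_cons z v).mpr ⟨by omega, hv⟩), if_pos hv, countTop_cons,
            if_neg hzz, Nat.zero_add]
        · rw [if_neg (fun hall => hv ((allLt_cons z v).mp hall).2), if_neg hv]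
      · rw [if_neg (by omega)]
        rcases eq_or_ne (z:ℕ) (s-1) with hz2 | hz2
        · rw [if_pos hz2]
          apply Finset.sum_congr rfl
          intro v _
          by_cases hv : (∀ i, ((v i:ℕ) < s))
          · rw [if_pos ((allLt_cons z v).mpr ⟨by omega, hv⟩), if_pos hv, countTop_cons,
              if_pos hz2, Nat.add_comm]
          · rw [if_neg (fun hall => hv ((allLt_cons z v).mp hall).2), if_neg hv]
        · rw [if_neg hz2]
          apply Finset.sum_eq_zero
          intro v _
          rw [if_neg (fun hall => absurd ((allLt_cons z v).mp hall).1 (by omega))]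
    rw [Finset.sum_congr rfl (fun z _ => hinner z)]
    have hsplit : (∑ z : Fin r, if (z:ℕ) < s - 1
            then (∑ v : Fin m → Fin r, if (∀ i, ((v i:ℕ) < s)) then φ (countTop s v) else 0)
            else (if (z:ℕ) = s - 1
              then (∑ v : Fin m → Fin r, if (∀ i, ((v i:ℕ) < s)) then φ (countTop s v + 1) else 0)
              else 0))
        = ((s:ℝ) - 1) * (∑ v : Fin m → Fin r, if (∀ i, ((v i:ℕ) < s)) then φ (countTop s v) else 0)
          + (∑ v : Fin m → Fin r, if (∀ i, ((v i:ℕ) < s)) then φ (countTop s v + 1) else 0) := by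
      set A := (∑ v : Fin m → Fin r, if (∀ i, ((v i:ℕ) < s)) then φ (countTop s v) else 0) with hA
      set B := (∑ v : Fin m → Fin r, if (∀ i, ((v i:ℕ) < s)) then φ (countTop s v + 1) else 0)
        with hB
      rw [← Finset.sum_filter_add_sum_filter_not Finset.univ (fun z : Fin r => (z:ℕ) < s - 1)]
      have h1 : ∑ z ∈ Finset.univ.filter (fun z : Fin r => (z:ℕ) < s - 1),
          (if (z:ℕ) < s - 1 then A else (if (z:ℕ) = s - 1 then B else 0)) = ((s:ℝ)-1) * A := by
        rw [Finset.sum_congr rfl (fun z hz => if_pos (Finset.mem_filter.1 hz).2)]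
        rw [Finset.sum_const, nsmul_eq_mul, card_lo (by omega)]
        congr 1
        have h1s : (1:ℕ) ≤ s := by omega
        push_cast [Nat.cast_sub h1s]
        ring
      have h2 : ∑ z ∈ Finset.univ.filter (fun z : Fin r => ¬ (z:ℕ) < s - 1),
          (if (z:ℕ) < s - 1 then A else (if (z:ℕ) = s - 1 then B else 0)) = B := by
        rw [Finset.sum_congr rfl (fun z hz => if_neg (Finset.mem_filter.1 hz).2)]
        have htop : (Finset.univ.filter (fun z : Fin r => ¬ (z:ℕ) < s - 1)).filter
            (fun z : Fin r => (z:ℕ) = s - 1) = {(⟨s-1, by omega⟩ : Fin r)} := by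
          ext z
          simp only [Finset.mem_filter, Finset.mem_univ, true_and, Finset.mem_singleton]
          constructor
          · rintro ⟨h1', h2'⟩
            exact Fin.ext h2'
          · rintro rfl
            simp
        rw [← Finset.sum_filter, htop, Finset.sum_singleton]
      rw [h1, h2]
    rw [hsplit]
    have HA := ih φ
    have HB : (∑ v : Fin m → Fin r, if (∀ i, ((v i:ℕ) < s)) then φ (countTop s v + 1) else 0)
        = ∑ j ∈ Finset.range (m+1), Bc s m j * φ (j+1) := by
      simpa using ih (fun j => φ (j+1))
    rw [HA, HB]
    -- now pure algebra with Pascal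
    rw [Finset.sum_range_succ' (fun j => Bc s (m+1) j * φ j) (m+1)]
    have hpas : ∀ j, Bc s (m+1) (j+1) * φ (j+1)
        = ((s:ℝ)-1) * (Bc s m (j+1) * φ (j+1)) + Bc s m j * φ (j+1) := by
      intro j
      rw [Bc_pascal]
      ring
    rw [Finset.sum_congr rfl (fun j _ => hpas j), Finset.sum_add_distrib, ← Finset.mul_sum]
    rw [Bc_zero_succ]
    have e3 : ∑ j ∈ Finset.range (m+1), Bc s m j * φ j
        = (∑ j ∈ Finset.range m, Bc s m (j+1) * φ (j+1)) + Bc s m 0 * φ 0 := by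
      rw [Finset.sum_range_succ' (fun j => Bc s m j * φ j) m]
    have e4 : ∑ j ∈ Finset.range (m+1), Bc s m (j+1) * φ (j+1)
        = ∑ j ∈ Finset.range m, Bc s m (j+1) * φ (j+1) := by
      rw [Finset.sum_range_succ]
      rw [Bc_eq_zero (by omega)]
      ring
    rw [e4, e3]
    ring


lemma fracBall_nonneg {r m s k : ℕ} {α : ℝ} (hα0 : 0 ≤ α) (x : Fin m → Fin r) :
    0 ≤ fracBall r m s k α x := by
  unfold fracBall
  split_ifs <;> norm_num
  exact hα0

lemma fracBall_le_one {r m s k : ℕ} {α : ℝ} (hα1 : α ≤ 1) (x : Fin m → Fin r) :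
    fracBall r m s k α x ≤ 1 := by
  unfold fracBall
  split_ifs <;> norm_num
  exact hα1

lemma sum_fracBall {r s : ℕ} (hs : 2 ≤ s) (hsr : s ≤ r) (m k : ℕ) (α : ℝ) :
    ∑ x : Fin m → Fin r, fracBall r m s k α x = Pw s m (k+1) α := by
  have h1 : ∑ x : Fin m → Fin r, fracBall r m s k α x
      = ∑ j ∈ Finset.range (m+1), Bc s m j
          * (if j ≤ k then (1:ℝ) else if j = k+1 then α else 0) := by
    rw [← sum_ball_count hs hsr m (fun j => if j ≤ k then (1:ℝ) else if j = k+1 then α else 0)]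
    rfl
  rw [h1]
  unfold Pw
  rcases le_or_gt (k+1) m with hkm | hkm
  · have hsplit : Finset.range (m+1) = Finset.range (k+1) ∪ Finset.Ico (k+1) (m+1) := by
      rw [Finset.range_eq_Ico, Finset.range_eq_Ico]
      exact (Finset.Ico_union_Ico_eq_Ico (Nat.zero_le _) (by omega)).symm
    rw [hsplit, Finset.sum_union]
    · have hA : ∑ j ∈ Finset.range (k+1),
          Bc s m j * (if j ≤ k then (1:ℝ) else if j = k+1 then α else 0)
          = ∑ j ∈ Finset.range (k+1), Bc s m j := by
        apply Finset.sum_congr rfl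
        intro j hj
        rw [if_pos (by simp at hj; omega)]
        ring
      have hB : ∑ j ∈ Finset.Ico (k+1) (m+1),
          Bc s m j * (if j ≤ k then (1:ℝ) else if j = k+1 then α else 0)
          = α * Bc s m (k+1) := by
        rw [Finset.sum_eq_single_of_mem (k+1) (by simp; omega)]
        · rw [if_neg (by omega), if_pos rfl]
          ring
        · intro b hb hbne
          rw [if_neg, if_neg, mul_zero]
          · simp at hb; omega
          · simp at hb; omega
      rw [hA, hB]
    · apply Finset.disjoint_left.2
      intro a ha hb
      simp at ha hb
      omega
  · have hall : ∑ j ∈ Finset.range (m+1),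
        Bc s m j * (if j ≤ k then (1:ℝ) else if j = k+1 then α else 0)
        = ∑ j ∈ Finset.range (m+1), Bc s m j := by
      apply Finset.sum_congr rfl
      intro j hj
      rw [if_pos (by simp at hj; omega)]
      ring
    rw [hall]
    have h2 : ∑ j ∈ Finset.range (k+1), Bc s m j = ∑ j ∈ Finset.range (m+1), Bc s m j := by
      symm
      apply Finset.sum_subset (Finset.range_subset_range.2 (by omega))
      intro j hj hj2
      exact Bc_eq_zero (by simp at hj hj2; omega)
    rw [← h2, Bc_eq_zero hkm]
    ring

lemma countTop_insertNth {r s n : ℕ} (i : Fin (n+1)) (y : Fin r) (w : Fin n → Fin r) :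
    countTop s (Fin.insertNth i y w)
      = (if (y:ℕ) = s - 1 then 1 else 0) + countTop s w := by
  unfold countTop
  rw [Finset.card_filter, Finset.card_filter,
    Fin.sum_univ_succAbove (fun j => if ((Fin.insertNth (α := fun _ => Fin r) i y w j : ℕ)) = s - 1
      then (1:ℕ) else 0) i]
  congr 1
  · rw [Fin.insertNth_apply_same]
  · apply Finset.sum_congr rfl
    intro j _
    rw [Fin.insertNth_apply_succAbove (α := fun _ => Fin r) i y w]

lemma allLt_insertNth {r s n : ℕ} (i : Fin (n+1)) (y : Fin r) (w : Fin n → Fin r) :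
    (∀ j, ((Fin.insertNth (α := fun _ => Fin r) i y w j : ℕ)) < s)
      ↔ ((y:ℕ) < s ∧ ∀ j, ((w j:ℕ) < s)) := by
  rw [Fin.forall_iff_succAbove i]
  simp [Fin.insertNth_apply_same, Fin.insertNth_apply_succAbove]

lemma shadow_ball_le {r s n k : ℕ} (hs : 2 ≤ s) (hsr : s ≤ r) {α : ℝ}
    (hα0 : 0 ≤ α) (hα1 : α ≤ 1) (w : Fin n → Fin r) :
    fracShadow (fracBall r (n+1) s k α) w ≤ fracBall r n s k α w := by
  have : Nonempty (Fin (n+1) × Fin r) := ⟨⟨0, ⟨0, by omega⟩⟩⟩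
  apply ciSup_le
  rintro ⟨i, y⟩
  by_cases hx : (∀ j, ((Fin.insertNth (α := fun _ => Fin r) i y w j : ℕ)) < s)
  · have hw : (∀ j, ((w j:ℕ) < s)) := ((allLt_insertNth i y w).1 hx).2
    unfold fracBall
    rw [if_pos hx, if_pos hw, countTop_insertNth]
    rcases eq_or_ne ((y:ℕ)) (s-1) with hy | hy
    · rw [if_pos hy]
      set c := countTop s w
      by_cases h1 : c ≤ k
      · rw [if_pos h1]
        split_ifs <;> linarith
      · rw [if_neg h1, if_neg (by omega)]
        by_cases h2 : c = k+1
        · rw [if_neg (by omega)]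
          split_ifs <;> norm_num
          · exact hα0
        · rw [if_neg h2, if_neg (by omega)]
    · rw [if_neg hy, Nat.zero_add]
  · unfold fracBall
    rw [if_neg hx]
    exact fracBall_nonneg hα0 w


lemma Bc_zero (s m : ℕ) : Bc s m 0 = ((s:ℝ)-1)^m := by simp [Bc]

lemma Pw_K0 (s m : ℕ) (α : ℝ) : Pw s m 0 α = α * ((s:ℝ)-1)^m := by
  simp [Pw, Bc_zero]

theorem main_thm {s r : ℕ} (hs : 2 ≤ s) (hsr : s ≤ r) :
    ∀ n (f : (Fin (n+1) → Fin r) → ℝ), (∀ x, 0 ≤ f x) → (∀ x, f x ≤ 1) →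
    SCompressed s f → ∀ (K : ℕ) (α : ℝ), 0 ≤ α → α ≤ 1 →
    Pw s (n+1) K α ≤ ∑ x, f x → Pw s n K α ≤ ∑ w : Fin n → Fin r, fracShadow f w := by
  have hs1 : 1 ≤ s := by omega
  have hr : 0 < r := by omega
  have hsp := s1_pos hs
  intro n
  induction n with
  | zero =>
    intro f hf0 hf1 hcomp K α hα0 hα1 hW
    set w0 : Fin 0 → Fin r := fun i => i.elim0 with hw0
    have hsum0 : ∑ w : Fin 0 → Fin r, fracShadow f w = fracShadow f w0 := by
      rw [Fintype.sum_eq_single w0]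
      intro x hx
      exact absurd (Subsingleton.elim x w0) hx
    rw [hsum0]
    have hP0le1 : Pw s 0 K α ≤ 1 := by
      match K with
      | 0 => rw [Pw_K0]; simpa using hα1
      | (K'+1) =>
        unfold Pw
        rw [Finset.sum_range_succ']
        have h1 : ∀ j ∈ Finset.range K', Bc s 0 (j+1) = 0 :=
          fun j _ => by simp [Bc, Nat.choose_eq_zero_of_lt]
        rw [Finset.sum_congr rfl h1]
        have h2 : Bc s 0 (K'+1) = 0 := by simp [Bc, Nat.choose_eq_zero_of_lt]
        rw [h2]
        simp [Bc_zero]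
    by_cases hbig : ∃ x : Fin 1 → Fin r, 0 < f x ∧ s - 1 ≤ (x 0 : ℕ)
    · obtain ⟨x, hx, hx0⟩ := hbig
      set z0 : Fin r := ⟨0, hr⟩ with hz0
      have hlt : z0 < x 0 := by
        rw [Fin.lt_def]
        simp only [hz0]
        omega
      have hcval := hcomp x 0 z0 hx hlt (by omega)
      have hxe : Function.update x 0 z0 = Fin.insertNth 0 z0 w0 := by
        funext j
        have hj : j = 0 := Subsingleton.elim j 0
        subst hj
        rw [Function.update_self, Fin.insertNth_apply_same]
      rw [hxe] at hcval
      calc Pw s 0 K α ≤ 1 := hP0le1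
        _ = f (Fin.insertNth 0 z0 w0) := hcval.symm
        _ ≤ fracShadow f w0 := le_fracShadow hr f 0 z0 w0
    · push_neg at hbig
      have hsum : ∑ x : Fin 1 → Fin r, f x = ∑ z : Fin r, f (Fin.cons z w0) := by
        rw [sum_pi_split' f]
        apply Finset.sum_congr rfl
        intro z _
        rw [Fintype.sum_eq_single w0]
        intro v hv
        exact absurd (Subsingleton.elim v w0) hv
      have hbound : ∑ z : Fin r, f (Fin.cons z w0)
          ≤ ((s:ℝ) - 1) * fracShadow f w0 := by
        rw [← Finset.sum_filter_add_sum_filter_not Finset.univ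
          (fun z : Fin r => (z:ℕ) < s - 1)]
        have hA : ∑ z ∈ Finset.univ.filter (fun z : Fin r => (z:ℕ) < s - 1),
            f (Fin.cons z w0) ≤ ((s:ℝ)-1) * fracShadow f w0 := by
          have hcard : ((Finset.univ.filter (fun z : Fin r => (z:ℕ) < s - 1)).card : ℝ)
              = (s:ℝ) - 1 := by
            rw [card_lo (by omega)]
            have : (1:ℕ) ≤ s := hs1
            push_cast [Nat.cast_sub this]
            ring
          calc ∑ z ∈ Finset.univ.filter (fun z : Fin r => (z:ℕ) < s - 1), f (Fin.cons z w0)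
              ≤ ∑ _z ∈ Finset.univ.filter (fun z : Fin r => (z:ℕ) < s - 1),
                  fracShadow f w0 := by
                apply Finset.sum_le_sum
                intro z _
                have : f (Fin.cons z w0) = f (Fin.insertNth 0 z w0) := by
                  rw [Fin.insertNth_zero']
                rw [this]
                exact le_fracShadow hr f 0 z w0
            _ = ((Finset.univ.filter (fun z : Fin r => (z:ℕ) < s - 1)).card : ℝ)
                  * fracShadow f w0 := by
                rw [Finset.sum_const, nsmul_eq_mul]
            _ = ((s:ℝ)-1) * fracShadow f w0 := by rw [hcard]
        have hB : ∑ z ∈ Finset.univ.filter (fun z : Fin r => ¬ (z:ℕ) < s - 1),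
            f (Fin.cons z w0) ≤ 0 := by
          apply Finset.sum_nonpos
          intro z hz
          simp only [Finset.mem_filter] at hz
          by_contra hpos
          push_neg at hpos
          have := hbig (Fin.cons z w0) hpos
          rw [Fin.cons_zero] at this
          omega
        linarith
      have hP1 : ((s:ℝ)-1) * Pw s 0 K α ≤ Pw s 1 K α := by
        match K with
        | 0 =>
          rw [Pw_K0, Pw_K0]
          ring_nf
          nlinarith [hsp, hα0]
        | (K'+1) =>
          have h1 : ((s:ℝ)-1) ≤ Pw s 1 (K'+1) α := by
            unfold Pw
            have : Bc s 1 0 = (s:ℝ)-1 := by rw [Bc_zero]; ring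
            calc ((s:ℝ)-1) = Bc s 1 0 := this.symm
              _ ≤ ∑ j ∈ Finset.range (K'+1), Bc s 1 j := by
                  apply Finset.single_le_sum (fun j _ => Bc_nonneg hs1 1 j) (by simp)
              _ ≤ _ := by nlinarith [Bc_nonneg hs1 (s := s) 1 (K'+1),
                    mul_nonneg hα0 (Bc_nonneg hs1 (s := s) 1 (K'+1))]
          nlinarith [hP0le1, hsp, Pw_nonneg hs1 hα0 0 (K'+1)]
      have hfs : 0 ≤ fracShadow f w0 := by
        refine le_trans (hf0 (Fin.insertNth 0 ⟨0, hr⟩ w0)) ?_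
        exact le_fracShadow hr f 0 ⟨0, hr⟩ w0
      rw [hsum] at hW
      nlinarith [hP1, hbound, hW, hsp]
  | succ n ih =>
    intro f hf0 hf1 hcomp K α hα0 hα1 hW
    -- slices and basic quantities
    set t : Fin r → ℝ := fun z => ∑ v : Fin (n+1) → Fin r, f (Fin.cons z v) with ht
    set M : (Fin (n+1) → Fin r) → ℝ := fun w => ⨆ z : Fin r, f (Fin.cons z w) with hM
    have hne : Nonempty (Fin r) := ⟨⟨0, hr⟩⟩
    have hbddM : ∀ w, BddAbove (Set.range fun z : Fin r => f (Fin.cons z w)) :=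
      fun w => Set.Finite.bddAbove (Set.finite_range _)
    have hMle : ∀ w, M w ≤ fracShadow f w := by
      intro w
      apply ciSup_le
      intro z
      have : f (Fin.cons z w) = f (Fin.insertNth 0 z w) := by rw [Fin.insertNth_zero']
      rw [this]
      exact le_fracShadow hr f 0 z w
    have hfM : ∀ z w, f (Fin.cons z w) ≤ M w := fun z w => le_ciSup (hbddM w) z
    have htnn : ∀ z, 0 ≤ t z := fun z => Finset.sum_nonneg (fun v _ => hf0 _)
    have hWt : ∑ x : Fin (n+2) → Fin r, f x = ∑ z : Fin r, t z := sum_pi_split' f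
    have hb1 : ∑ w : Fin (n+1) → Fin r, M w ≤ ∑ w : Fin (n+1) → Fin r, fracShadow f w :=
      Finset.sum_le_sum (fun w _ => hMle w)
    have hb2 : ∀ z, t z ≤ ∑ w : Fin (n+1) → Fin r, M w := by
      intro z
      exact Finset.sum_le_sum (fun w _ => hfM z w)
    -- slice shadows
    set D : Fin r → ℝ := fun z => ∑ v : Fin n → Fin r,
      fracShadow (fun v' : Fin (n+1) → Fin r => f (Fin.cons z v')) v with hD
    have hb3 : ∑ z : Fin r, D z ≤ ∑ w : Fin (n+1) → Fin r, fracShadow f w := by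
      rw [sum_pi_split' (fun w => fracShadow f w)]
      apply Finset.sum_le_sum
      intro z _
      apply Finset.sum_le_sum
      intro v _
      apply ciSup_le
      rintro ⟨i, y⟩
      have he : f (Fin.cons z (Fin.insertNth i y v))
          = f (Fin.insertNth i.succ y (Fin.cons z v)) := by
        rw [insertNth_succ_cons]
      calc (fun v' : Fin (n+1) → Fin r => f (Fin.cons z v')) (Fin.insertNth i y v)
          = f (Fin.insertNth i.succ y (Fin.cons z v)) := he
        _ ≤ fracShadow f (Fin.cons z v) := le_fracShadow hr f i.succ y _
    -- cross compression on slice masses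
    have hb4 : ∀ z' z : Fin r, z' < z → s - 1 ≤ (z:ℕ) → t z ≤ t z' := by
      intro z' z hzz hz
      apply Finset.sum_le_sum
      intro v _
      exact slice_cross hcomp hf0 hf1 hzz (by omega) v
    -- column bound
    set Lo := Finset.univ.filter (fun z : Fin r => (z:ℕ) < s - 1) with hLo
    set Hi := Finset.univ.filter (fun z : Fin r => ¬ (z:ℕ) < s - 1) with hHi
    have hcardLo : ((Lo.card : ℕ) : ℝ) = (s:ℝ) - 1 := by
      rw [hLo, card_lo (by omega)]
      have : (1:ℕ) ≤ s := hs1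
      push_cast [Nat.cast_sub this]
      ring
    have hb5 : ∑ x : Fin (n+2) → Fin r, f x
        ≤ ((s:ℝ)-1) * (∑ w : Fin (n+1) → Fin r, M w) + ∑ z ∈ Hi, t z := by
      rw [hWt, ← Finset.sum_filter_add_sum_filter_not Finset.univ
        (fun z : Fin r => (z:ℕ) < s - 1)]
      have hLopart : ∑ z ∈ Lo, t z ≤ ((s:ℝ)-1) * ∑ w : Fin (n+1) → Fin r, M w := by
        have hswap : ∑ z ∈ Lo, t z
            = ∑ w : Fin (n+1) → Fin r, ∑ z ∈ Lo, f (Fin.cons z w) := by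
          rw [ht]
          exact Finset.sum_comm
        rw [hswap]
        have : ∀ w : Fin (n+1) → Fin r, ∑ z ∈ Lo, f (Fin.cons z w) ≤ ((s:ℝ)-1) * M w := by
          intro w
          calc ∑ z ∈ Lo, f (Fin.cons z w) ≤ ∑ _z ∈ Lo, M w :=
                Finset.sum_le_sum (fun z _ => hfM z w)
            _ = (Lo.card : ℝ) * M w := by rw [Finset.sum_const, nsmul_eq_mul]
            _ = ((s:ℝ)-1) * M w := by rw [hcardLo]
        calc ∑ w : Fin (n+1) → Fin r, ∑ z ∈ Lo, f (Fin.cons z w)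
            ≤ ∑ w : Fin (n+1) → Fin r, ((s:ℝ)-1) * M w := Finset.sum_le_sum (fun w _ => this w)
          _ = ((s:ℝ)-1) * ∑ w : Fin (n+1) → Fin r, M w := by rw [← Finset.mul_sum]
      linarith
    -- main case analysis
    by_cases hcase1 : ∃ z : Fin r, Pw s (n+1) K α ≤ t z
    · obtain ⟨z, hz⟩ := hcase1
      calc Pw s (n+1) K α ≤ t z := hz
        _ ≤ ∑ w : Fin (n+1) → Fin r, M w := hb2 z
        _ ≤ _ := hb1
    · push_neg at hcase1
      -- per-slice IH bound through the curve
      have hslice : ∀ z : Fin r, t z < (s:ℝ)^(n+1) → Gc s n (t z) ≤ D z := by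
        intro z hzlt
        obtain ⟨K₀, α₀, hK₀, hα₀0, hα₀1, hrep⟩ := rep_exists hs n (htnn z) hzlt
        have hIH := ih (fun v => f (Fin.cons z v)) (fun v => hf0 _) (fun v => hf1 _)
          (slice_compressed hcomp hf1 z) K₀ α₀ hα₀0 hα₀1 (by rw [hrep])
        calc Gc s n (t z) = Gc s n (Pw s (n+1) K₀ α₀) := by rw [hrep]
          _ ≤ Pw s n K₀ α₀ := Gc_ball_ub hs hK₀ α₀
          _ ≤ D z := hIH
      match K with
      | 0 =>
        -- small-weight branch
        by_cases hsplit0 : ∃ z : Fin r, ((s:ℝ)-1)^(n+1) ≤ t z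
        · obtain ⟨z, hz⟩ := hsplit0
          have h1 : Pw s (n+1) 0 α ≤ t z := by
            rw [Pw_K0]
            nlinarith [pow_pos hsp (n+1)]
          calc Pw s (n+1) 0 α ≤ t z := h1
            _ ≤ ∑ w : Fin (n+1) → Fin r, M w := hb2 z
            _ ≤ _ := hb1
        · push_neg at hsplit0
          have hDz : ∀ z : Fin r, t z / ((s:ℝ)-1) ≤ D z := by
            intro z
            have hβ1 : t z / ((s:ℝ)-1)^(n+1) ≤ 1 := by
              rw [div_le_one (pow_pos hsp (n+1))]
              exact le_of_lt (hsplit0 z)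
            have hβ0 : 0 ≤ t z / ((s:ℝ)-1)^(n+1) :=
              div_nonneg (htnn z) (le_of_lt (pow_pos hsp (n+1)))
            have hIH := ih (fun v => f (Fin.cons z v)) (fun v => hf0 _) (fun v => hf1 _)
              (slice_compressed hcomp hf1 z) 0 (t z / ((s:ℝ)-1)^(n+1)) hβ0 hβ1
              (by rw [Pw_K0]; rw [div_mul_cancel₀ _ (ne_of_gt (pow_pos hsp (n+1)))])
            rw [Pw_K0] at hIH
            have he : t z / ((s:ℝ)-1)^(n+1) * ((s:ℝ)-1)^n = t z / ((s:ℝ)-1) := by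
              rw [pow_succ]
              field_simp
            rwa [he] at hIH
          have hsumD : (∑ z : Fin r, t z) / ((s:ℝ)-1) ≤ ∑ z : Fin r, D z := by
            rw [Finset.sum_div]
            exact Finset.sum_le_sum (fun z _ => hDz z)
          have htarget : Pw s (n+1) 0 α ≤ (∑ z : Fin r, t z) / ((s:ℝ)-1) := by
            rw [le_div_iff₀ hsp, ← hWt]
            calc Pw s (n+1) 0 α * ((s:ℝ)-1) = Pw s (n+1+1) 0 α := by
                  rw [Pw_K0, Pw_K0, pow_succ]; ring
              _ ≤ _ := hW
          calc Pw s (n+1) 0 α ≤ (∑ z : Fin r, t z) / ((s:ℝ)-1) := htarget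
            _ ≤ ∑ z : Fin r, D z := hsumD
            _ ≤ _ := hb3
      | (K'+1) =>
        set T := Pw s (n+1) (K'+1) α with hT
        set C := Pw s (n+1) K' α with hC
        have hrec : Pw s (n+1+1) (K'+1) α = ((s:ℝ)-1) * T + C := Pw_rec (n+1) K' α
        set hh := ∑ z ∈ Hi, t z with hhh
        by_cases hcase2 : hh ≤ C
        · -- mass in low slices, use M bound
          have h1 : ((s:ℝ)-1) * T + C ≤ ((s:ℝ)-1) * (∑ w : Fin (n+1) → Fin r, M w) + C := by
            calc ((s:ℝ)-1) * T + C = Pw s (n+1+1) (K'+1) α := hrec.symm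
              _ ≤ ∑ x : Fin (n+2) → Fin r, f x := hW
              _ ≤ ((s:ℝ)-1) * (∑ w : Fin (n+1) → Fin r, M w) + hh := hb5
              _ ≤ _ := by linarith
          have h2 : T ≤ ∑ w : Fin (n+1) → Fin r, M w := by
            have := (mul_le_mul_iff_of_pos_left hsp).1 (by linarith : ((s:ℝ)-1) * T
              ≤ ((s:ℝ)-1) * (∑ w : Fin (n+1) → Fin r, M w))
            exact this
          exact le_trans h2 hb1
        · push_neg at hcase2
          set top : Fin r := ⟨s-1, by omega⟩ with htop
          have htopval : (top : ℕ) = s - 1 := rfl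
          set τ := t top with hτ
          have htopHi : top ∈ Hi := by
            rw [hHi]
            simp only [Finset.mem_filter, Finset.mem_univ, true_and]
            omega
          have hHiτ : ∀ z ∈ Hi, t z ≤ τ := by
            intro z hz
            rw [hHi, Finset.mem_filter] at hz
            rcases eq_or_ne ((z:ℕ)) (s-1) with he | hne'
            · have : z = top := Fin.ext (by simp [htop, he])
              rw [this]
            · have hlt : top < z := by
                rw [Fin.lt_def, htopval]
                omega
              exact hb4 top z hlt (by omega)
          have hLoτ : ∀ z ∈ Lo, τ ≤ t z := by
            intro z hz
            rw [hLo, Finset.mem_filter] at hz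
            have hlt : z < top := by
              rw [Fin.lt_def, htopval]
              omega
            exact hb4 z top hlt (by rw [htopval])
          have hC0 : 0 ≤ C := Pw_nonneg hs1 hα0 (n+1) K'
          have hτpos : 0 < τ := by
            by_contra hcon
            push_neg at hcon
            have : hh ≤ 0 := by
              rw [hhh]
              apply Finset.sum_nonpos
              intro z hz
              exact le_trans (hHiτ z hz) hcon
            linarith
          have hτT : τ < T := hcase1 top
          have hCT : C ≤ T := Pw_mono_K hs1 hα0 hα1 (n+1) K'
          have hhτ : τ ≤ hh := by
            rw [hhh]
            exact Finset.single_le_sum (fun z _ => htnn z) htopHi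
          have hTpow : T ≤ (s:ℝ)^(n+1) := Pw_le_pow hs1 hα0 hα1 (n+1) (K'+1)
          -- apply the core inequality
          have hcore := core_ineq hs n Lo t (τ := τ) (T := T) (C := C) (h := hh)
            hcardLo hτpos hτT hC0 hCT
            (fun z hz => ⟨hLoτ z hz, le_of_lt (hcase1 z)⟩) hhτ (le_of_lt hcase2)
            (by
              have : (∑ z ∈ Lo, t z) + hh = ∑ z : Fin r, t z := by
                rw [hhh, hLo, hHi]
                exact Finset.sum_filter_add_sum_filter_not _ _ _
              rw [this, ← hWt, ← hrec]
              exact hW)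
          -- slice bounds
          have hLoD : ∑ z ∈ Lo, Gc s n (t z) ≤ ∑ z ∈ Lo, D z :=
            Finset.sum_le_sum (fun z _ => hslice z (lt_of_lt_of_le (hcase1 z) hTpow))
          have hHiD : (hh/τ) * Gc s n τ ≤ ∑ z ∈ Hi, D z := by
            have hzD : ∀ z ∈ Hi, (t z/τ) * Gc s n τ ≤ D z := by
              intro z hz
              have hch := Gc_chord hs n (htnn z) (hHiτ z hz)
              have h1 : (t z/τ) * Gc s n τ ≤ Gc s n (t z) := by
                rw [div_mul_eq_mul_div, div_le_iff₀ hτpos]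
                nlinarith
              exact le_trans h1 (hslice z (lt_of_le_of_lt (hHiτ z hz)
                (lt_of_lt_of_le hτT hTpow)))
            calc (hh/τ) * Gc s n τ = ∑ z ∈ Hi, (t z/τ) * Gc s n τ := by
                  rw [hhh, Finset.sum_div, Finset.sum_mul]
              _ ≤ ∑ z ∈ Hi, D z := Finset.sum_le_sum hzD
          -- ball values of the curve
          have hGT : Pw s n (K'+1) α ≤ Gc s n T := Gc_ball_lb hs n (K'+1) hα0 hα1
          have hGC : Pw s n K' α ≤ Gc s n C := Gc_ball_lb hs n K' hα0 hα1
          have hfinal : Pw s (n+1) (K'+1) α ≤ ∑ z : Fin r, D z := by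
            have hDsplit : ∑ z : Fin r, D z = (∑ z ∈ Lo, D z) + ∑ z ∈ Hi, D z := by
              rw [hLo, hHi]
              exact (Finset.sum_filter_add_sum_filter_not _ _ _).symm
            calc Pw s (n+1) (K'+1) α = ((s:ℝ)-1) * Pw s n (K'+1) α + Pw s n K' α :=
                  Pw_rec n K' α
              _ ≤ ((s:ℝ)-1) * Gc s n T + Gc s n C :=
                  add_le_add (mul_le_mul_of_nonneg_left hGT (le_of_lt hsp)) hGC
              _ ≤ (∑ z ∈ Lo, Gc s n (t z)) + (hh/τ) * Gc s n τ := hcore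
              _ ≤ (∑ z ∈ Lo, D z) + ∑ z ∈ Hi, D z := add_le_add hLoD hHiD
              _ = ∑ z : Fin r, D z := hDsplit.symm
          exact le_trans hfinal hb3


/-- If `f` is an `s`-compressed fractional family of weight at most `sⁿ` and `h`
is the fractional Hamming ball of the same weight, then `|Δf| ≥ |Δh|`. -/
theorem fracShadow_min (r n s k : ℕ) (α : ℝ) (hs1 : 1 ≤ s) (hsr : s ≤ r)
    (f : (Fin (n+1) → Fin r) → ℝ) (hf : ∀ w, f w ∈ Set.Icc (0:ℝ) 1)
    (hcomp : SCompressed s f)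
    (hwle : ∑ w : Fin (n+1) → Fin r, f w ≤ (s : ℝ) ^ (n+1))
    (hα : α ∈ Set.Icc (0:ℝ) 1)
    (hsame : ∑ w : Fin (n+1) → Fin r, fracBall r (n+1) s k α w =
      ∑ w : Fin (n+1) → Fin r, f w) :
    ∑ w : Fin n → Fin r, fracShadow (fracBall r (n+1) s k α) w ≤
      ∑ w : Fin n → Fin r, fracShadow f w := by
  have hr : 0 < r := by omega
  obtain ⟨hα0, hα1⟩ := hα
  have hf0 : ∀ x, 0 ≤ f x := fun x => (hf x).1
  have hf1 : ∀ x, f x ≤ 1 := fun x => (hf x).2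
  rcases eq_or_lt_of_le hs1 with hs1' | hs2
  · -- s = 1 case
    have hs : s = 1 := hs1'.symm
    subst hs
    set z0 : Fin r := ⟨0, hr⟩ with hz0
    have hz0v : ((z0 : Fin r) : ℕ) = 0 := rfl
    set zw : Fin (n+1) → Fin r := fun _ => z0 with hzw
    set V := ∑ x : Fin (n+1) → Fin r, fracBall r (n+1) 1 k α x with hV
    -- ball vanishes away from the all-zero word
    have hball0 : ∀ x : Fin (n+1) → Fin r, x ≠ zw → fracBall r (n+1) 1 k α x = 0 := by
      intro x hx
      unfold fracBall
      rw [if_neg]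
      intro hall
      apply hx
      funext j
      have h1 := hall j
      have hxj : (x j : ℕ) = 0 := by omega
      exact Fin.ext (by rw [hxj])
    have hVle1 : V ≤ 1 := by
      rw [hV, Fintype.sum_eq_single zw hball0]
      exact fracBall_le_one hα1 zw
    have hV0 : 0 ≤ V := Finset.sum_nonneg (fun x _ => fracBall_nonneg hα0 x)
    -- LHS ≤ V
    have hLHS : ∑ w : Fin n → Fin r, fracShadow (fracBall r (n+1) 1 k α) w ≤ V := by
      have hpt : ∀ w : Fin n → Fin r,
          fracShadow (fracBall r (n+1) 1 k α) w
            ≤ (if w = (fun _ => z0 : Fin n → Fin r) then V else 0) := by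
        intro w
        have : Nonempty (Fin (n+1) × Fin r) := ⟨⟨0, z0⟩⟩
        apply ciSup_le
        rintro ⟨i, y⟩
        by_cases hw : w = (fun _ => z0 : Fin n → Fin r)
        · rw [if_pos hw]
          rw [hV]
          apply Finset.single_le_sum (fun x _ => fracBall_nonneg hα0 x) (Finset.mem_univ _)
        · rw [if_neg hw]
          rw [hball0]
          intro hx
          apply hw
          funext j
          have h2 : Fin.insertNth (α := fun _ => Fin r) i y w (i.succAbove j)
              = zw (i.succAbove j) := by rw [hx]
          rw [Fin.insertNth_apply_succAbove (α := fun _ => Fin r) i y w] at h2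
          exact h2
      calc ∑ w : Fin n → Fin r, fracShadow (fracBall r (n+1) 1 k α) w
          ≤ ∑ w : Fin n → Fin r, (if w = (fun _ => z0 : Fin n → Fin r) then V else 0) :=
            Finset.sum_le_sum (fun w _ => hpt w)
        _ = V := by
            rw [Fintype.sum_eq_single (fun _ => z0 : Fin n → Fin r)]
            · rw [if_pos rfl]
            · intro x hx
              rw [if_neg hx]
    -- V ≤ RHS
    have hx' : ∃ x' : Fin (n+1) → Fin r, V ≤ f x' := by
      by_cases hA : ∃ (x : Fin (n+1) → Fin r) (i : Fin (n+1)), 0 < f x ∧ (x i : ℕ) ≠ 0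
      · obtain ⟨x, i, hx, hxi⟩ := hA
        refine ⟨Function.update x i z0, ?_⟩
        have hlt : z0 < x i := by
          rw [Fin.lt_def, hz0v]
          omega
        have := hcomp x i z0 hx hlt (by omega)
        rw [this]
        exact hVle1
      · push_neg at hA
        refine ⟨zw, ?_⟩
        have hsum : ∑ x : Fin (n+1) → Fin r, f x = f zw := by
          rw [Fintype.sum_eq_single zw]
          intro x hx
          by_contra hne
          have hpos : 0 < f x := lt_of_le_of_ne (hf0 x) (Ne.symm hne)
          apply hx
          funext j
          have h3 := hA x j hpos
          exact Fin.ext (by rw [h3])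
        rw [hsame, hsum]
    obtain ⟨x', hx'⟩ := hx'
    have hRHS : V ≤ ∑ w : Fin n → Fin r, fracShadow f w := by
      calc V ≤ f x' := hx'
        _ ≤ fracShadow f (Fin.removeNth 0 x') := f_le_shadow_removeNth hr f 0 x'
        _ ≤ ∑ w : Fin n → Fin r, fracShadow f w :=
            Finset.single_le_sum (fun w _ => fracShadow_nonneg hr hf0 w) (Finset.mem_univ _)
    exact le_trans hLHS hRHS
  · -- s ≥ 2 case
    have hs : 2 ≤ s := hs2
    have hWeq : Pw s (n+1) (k+1) α = ∑ x : Fin (n+1) → Fin r, f x := by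
      rw [← hsame, sum_fracBall hs hsr]
    have hmain := main_thm hs hsr n f hf0 hf1 hcomp (k+1) α hα0 hα1 (le_of_eq hWeq)
    have hLHS : ∑ w : Fin n → Fin r, fracShadow (fracBall r (n+1) s k α) w
        ≤ Pw s n (k+1) α := by
      calc ∑ w : Fin n → Fin r, fracShadow (fracBall r (n+1) s k α) w
          ≤ ∑ w : Fin n → Fin r, fracBall r n s k α w :=
            Finset.sum_le_sum (fun w _ => shadow_ball_le hs hsr hα0 hα1 w)
        _ = Pw s n (k+1) α := sum_fracBall hs hsr n k α
    exact le_trans hLHS hmain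
end
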